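/- (Proposition 1: uniform geometric ergodicity.) For each θ ∈ Θ there is a unique probability mass function ν_θ on X with Σ_{x∈X} ν_θ(x)·Q_θ(x'|x) = ν_θ(x') for all x' ∈ X (the stationary distribution of Q_θ), and there exist constants C > 0 and α ∈ (0,1) such that for all θ ∈ Θ, all x ∈ X, and all integers t ≥ 1: ‖Q_θᵗ(x,·) − ν_θ‖_TV ≤ C·αᵗ, where Q_θᵗ denotes the t-step kernel. -/

import Mathlib

open Finset

/-- Total variation distance between two real-valued functions on a finite set. -/
noncomputable def tvDist {Y : Type*} [Fintype Y] (p q : Y → ℝ) : ℝ :=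
  (1 / 2) * ∑ y, |p y - q y|

/-- The combined high-level policy `π̄_hi(o'|s,o,b;θ)` of the options-with-failure
framework with failure parameter `ζ`. -/
noncomputable def pibarHiP {S O E : Type*} [Fintype O] [DecidableEq O]
    (pihi : O → S → E → ℝ) (ζ : ℝ) (o' : O) (s : S) (o : O) (b : Bool) (θ : E) : ℝ :=
  if b then pihi o' s θ
  else if o' = o then 1 - ζ + ζ / (Fintype.card O : ℝ)
  else ζ / (Fintype.card O : ℝ)

/-- The Markov kernel `Q_θ((s',a',o',b')|(s,a,o,b))` on `X = S × A × O × B`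
induced by an options-with-failure policy with parameter `θ`;
`P s' s a` denotes `P(s'|s,a)`. -/
noncomputable def optionsKernelP {S A O E : Type*} [Fintype O] [DecidableEq O]
    (P : S → S → A → ℝ)
    (pib : Bool → S → O → E → ℝ) (pihi : O → S → E → ℝ) (pilo : A → S → O → E → ℝ)
    (ζ : ℝ) (θ : E) (x x' : S × A × O × Bool) : ℝ :=
  P x'.1 x.1 x.2.1 * pib x'.2.2.2 x'.1 x.2.2.1 θ *
    pibarHiP pihi ζ x'.2.2.1 x'.1 x.2.2.1 x'.2.2.2 θ * pilo x'.2.1 x'.1 x'.2.2.1 θ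

/-- The `t`-step kernel: `kerPow Q 0` is the identity kernel, and
`kerPow Q (t+1) x y = ∑ z, kerPow Q t x z * Q z y`, so `kerPow Q 1 = Q`. -/
noncomputable def kerPow {X : Type*} [Fintype X] [DecidableEq X]
    (Q : X → X → ℝ) : ℕ → X → X → ℝ
  | 0 => fun x y => if x = y then 1 else 0
  | n + 1 => fun x y => ∑ z, kerPow Q n x z * Q z y

open Filter
set_option linter.unusedSectionVars false
set_option maxHeartbeats 1000000

section Generic
variable {X : Type*} [Fintype X] [DecidableEq X] [Nonempty X] (Q : X → X → ℝ)

lemma kerPow_zero (x y : X) : kerPow Q 0 x y = if x = y then 1 else 0 := rfl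

lemma kerPow_succ (n : ℕ) (x y : X) :
    kerPow Q (n+1) x y = ∑ z, kerPow Q n x z * Q z y := rfl

lemma kerPow_one (x y : X) : kerPow Q 1 x y = Q x y := by
  rw [kerPow_succ]
  simp [kerPow_zero, Finset.sum_ite_eq, if_pos (Finset.mem_univ x)]

lemma kerPow_add (m n : ℕ) (x y : X) :
    kerPow Q (m + n) x y = ∑ z, kerPow Q m x z * kerPow Q n z y := by
  induction n generalizing y with
  | zero => simp [kerPow_zero, mul_ite, Finset.sum_ite_eq, if_pos (Finset.mem_univ _)]
  | succ n ih =>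
    rw [show m + (n+1) = (m+n) + 1 from rfl, kerPow_succ]
    simp only [kerPow_succ, ih, Finset.sum_mul, Finset.mul_sum]
    rw [Finset.sum_comm]
    congr 1; ext z; congr 1; ext w; ring

lemma kerPow_nonneg (hQ0 : ∀ x y, 0 ≤ Q x y) (n : ℕ) (x y : X) : 0 ≤ kerPow Q n x y := by
  induction n generalizing x y with
  | zero => rw [kerPow_zero]; split <;> norm_num
  | succ n ih =>
    rw [kerPow_succ]
    exact Finset.sum_nonneg fun z _ => mul_nonneg (ih x z) (hQ0 z y)

lemma kerPow_row_sum (hQ1 : ∀ x, ∑ y, Q x y = 1) (n : ℕ) (x : X) :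
    ∑ y, kerPow Q n x y = 1 := by
  induction n generalizing x with
  | zero => simp [kerPow_zero]
  | succ n ih =>
    simp only [kerPow_succ]
    rw [Finset.sum_comm]
    calc ∑ z, ∑ y, kerPow Q n x z * Q z y
        = ∑ z, kerPow Q n x z * 1 := by
          congr 1; ext z; rw [← Finset.mul_sum, hQ1 z]
      _ = 1 := by simpa using ih x

lemma l1_nonexpansive (hQ0 : ∀ x y, 0 ≤ Q x y)
    (hQ1 : ∀ x, ∑ y, Q x y = 1) (δ : X → ℝ) :
    ∑ y, |∑ x, δ x * Q x y| ≤ ∑ x, |δ x| := by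
  calc ∑ y, |∑ x, δ x * Q x y|
      ≤ ∑ y, ∑ x, |δ x| * Q x y := by
        refine Finset.sum_le_sum fun y _ => ?_
        refine (Finset.abs_sum_le_sum_abs _ _).trans ?_
        refine Finset.sum_le_sum fun x _ => ?_
        rw [abs_mul, abs_of_nonneg (hQ0 x y)]
    _ = ∑ x, |δ x| * ∑ y, Q x y := by rw [Finset.sum_comm]; simp [Finset.mul_sum]
    _ = ∑ x, |δ x| := by simp [hQ1]

lemma doeblin_step (K : X → X → ℝ) (ε : ℝ) (hε : 0 ≤ ε)
    (hKlb : ∀ x y, ε ≤ K x y) (hK1 : ∀ x, ∑ y, K x y = 1)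
    (δ : X → ℝ) (hδ : ∑ x, δ x = 0) :
    ∑ y, |∑ x, δ x * K x y| ≤ (1 - ε * (Fintype.card X : ℝ)) * ∑ x, |δ x| := by
  have key : ∀ y, ∑ x, δ x * K x y = ∑ x, δ x * (K x y - ε) := by
    intro y
    simp only [mul_sub, Finset.sum_sub_distrib, ← Finset.sum_mul, hδ, zero_mul, sub_zero]
  calc ∑ y, |∑ x, δ x * K x y|
      ≤ ∑ y, ∑ x, |δ x| * (K x y - ε) := by
        refine Finset.sum_le_sum fun y _ => ?_
        rw [key y]
        refine (Finset.abs_sum_le_sum_abs _ _).trans ?_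
        refine Finset.sum_le_sum fun x _ => ?_
        rw [abs_mul, abs_of_nonneg (sub_nonneg.2 (hKlb x y))]
    _ = ∑ x, |δ x| * (1 - ε * (Fintype.card X : ℝ)) := by
        rw [Finset.sum_comm]
        refine Finset.sum_congr rfl fun x _ => ?_
        rw [← Finset.mul_sum]
        congr 1
        rw [Finset.sum_sub_distrib, hK1 x]
        simp [mul_comm]
    _ = (1 - ε * (Fintype.card X : ℝ)) * ∑ x, |δ x| := by
        rw [← Finset.sum_mul, mul_comm]

theorem doeblin_main (hQ0 : ∀ x y, 0 ≤ Q x y)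
    (hQ1 : ∀ x, ∑ y, Q x y = 1) (ε : ℝ) (hε : 0 < ε)
    (hεN : ε * (Fintype.card X : ℝ) < 1)
    (hK : ∀ x y, ε ≤ kerPow Q 2 x y) :
    ∃ ν : X → ℝ, (∀ x, 0 ≤ ν x) ∧ (∑ x, ν x = 1) ∧
      (∀ y, ∑ x, ν x * Q x y = ν y) ∧
      (∀ ν' : X → ℝ, (∑ x, ν' x = 1) → (∀ y, ∑ x, ν' x * Q x y = ν' y) → ν' = ν) ∧
      (∀ x (t : ℕ), 1 ≤ t →
        (1/2 : ℝ) * ∑ y, |kerPow Q t x y - ν y| ≤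
          (Real.sqrt (1 - ε * (Fintype.card X : ℝ)))⁻¹ *
            (Real.sqrt (1 - ε * (Fintype.card X : ℝ))) ^ t) := by
  set N : ℝ := (Fintype.card X : ℝ) with hNdef
  have hN1 : (1:ℝ) ≤ N := by
    rw [hNdef]; exact_mod_cast Fintype.card_pos
  set K : X → X → ℝ := kerPow Q 2 with hKdef
  set β : ℝ := 1 - ε * N with hβdef
  have hβ0 : 0 < β := by rw [hβdef]; linarith
  have hβ1 : β < 1 := by
    rw [hβdef]
    nlinarith
  have hK1 : ∀ x, ∑ y, K x y = 1 := kerPow_row_sum Q hQ1 2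
  have hK0 : ∀ x y, 0 ≤ K x y := kerPow_nonneg Q hQ0 2
  have hKQ : ∀ x y, K x y = ∑ z, Q x z * Q z y := by
    intro x y
    rw [hKdef, show (2:ℕ) = 1+1 from rfl, kerPow_add]
    simp [kerPow_one]
  set T : (X → ℝ) → (X → ℝ) := fun p y => ∑ x, p x * K x y with hTdef
  have hTsum : ∀ p : X → ℝ, ∑ y, T p y = ∑ x, p x := by
    intro p
    rw [hTdef]
    simp only
    rw [Finset.sum_comm]
    simp [← Finset.mul_sum, hK1]
  have hTnn : ∀ p : X → ℝ, (∀ x, 0 ≤ p x) → ∀ y, 0 ≤ T p y := by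
    intro p hp y
    exact Finset.sum_nonneg fun x _ => mul_nonneg (hp x) (hK0 x y)
  have hcontr : ∀ δ : X → ℝ, ∑ x, δ x = 0 →
      ∑ y, |∑ x, δ x * K x y| ≤ β * ∑ x, |δ x| :=
    fun δ h => doeblin_step K ε hε.le hK hK1 δ h
  have hTcontr : ∀ p q : X → ℝ, ∑ x, p x = ∑ x, q x →
      ∑ y, |T p y - T q y| ≤ β * ∑ x, |p x - q x| := by
    intro p q h
    have := hcontr (fun x => p x - q x)
      (by rw [Finset.sum_sub_distrib, h, sub_self])
    simpa [hTdef, sub_mul, Finset.sum_sub_distrib] using this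
  have hTuniq : ∀ a b : X → ℝ, ∑ x, a x = ∑ x, b x →
      (∀ y, T a y = a y) → (∀ y, T b y = b y) → a = b := by
    intro a b hsum ha hb
    have h1 : ∑ y, |a y - b y| ≤ β * ∑ y, |a y - b y| := by
      have := hTcontr a b hsum
      simp only [ha, hb] at this
      exact this
    have h2 : 0 ≤ ∑ y, |a y - b y| := Finset.sum_nonneg fun _ _ => abs_nonneg _
    have h3 : ∑ y, |a y - b y| = 0 := by nlinarith
    funext y
    have h4 := (Finset.sum_eq_zero_iff_of_nonneg
      (fun y _ => abs_nonneg (a y - b y))).1 h3 y (Finset.mem_univ y)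
    exact sub_eq_zero.1 (abs_eq_zero.1 h4)
  -- iterates
  set u : X → ℝ := fun _ => N⁻¹ with hudef
  set p : ℕ → X → ℝ := fun n => T^[n] u with hpdef
  have hpsucc : ∀ n, p (n+1) = T (p n) := by
    intro n
    rw [hpdef]
    exact Function.iterate_succ_apply' T n u
  have hpsum : ∀ n, ∑ x, p n x = 1 := by
    intro n
    induction n with
    | zero =>
      simp only [hpdef, Function.iterate_zero, id_eq, hudef]
      rw [Finset.sum_const, nsmul_eq_mul]
      field_simp
      simp [hNdef]
    | succ n ih => rw [hpsucc, hTsum, ih]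
  have hpnn : ∀ n x, 0 ≤ p n x := by
    intro n
    induction n with
    | zero =>
      intro x
      simp only [hpdef, Function.iterate_zero, id_eq, hudef]
      positivity
    | succ n ih =>
      intro x
      rw [hpsucc]
      exact hTnn _ ih x
  set D0 : ℝ := ∑ y, |p 1 y - p 0 y| with hD0def
  have hD0 : 0 ≤ D0 := Finset.sum_nonneg fun _ _ => abs_nonneg _
  have hgeo : ∀ n, ∑ y, |p (n+1) y - p n y| ≤ β ^ n * D0 := by
    intro n
    induction n with
    | zero => simp [hD0def]
    | succ n ih =>
      have h1 : ∑ y, |p (n+2) y - p (n+1) y| ≤ β * ∑ y, |p (n+1) y - p n y| := by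
        have := hTcontr (p (n+1)) (p n) (by rw [hpsum, hpsum])
        simp only [← hpsucc] at this
        exact this
      calc ∑ y, |p (n+2) y - p (n+1) y| ≤ β * ∑ y, |p (n+1) y - p n y| := h1
        _ ≤ β * (β ^ n * D0) := mul_le_mul_of_nonneg_left ih hβ0.le
        _ = β ^ (n+1) * D0 := by ring
  have hCauchy : ∀ y, CauchySeq (fun n => p n y) := by
    intro y
    apply cauchySeq_of_le_geometric β D0 hβ1
    intro n
    rw [Real.dist_eq, abs_sub_comm]
    calc |p (n+1) y - p n y| ≤ ∑ y', |p (n+1) y' - p n y'| :=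
          Finset.single_le_sum (f := fun y' => |p (n+1) y' - p n y'|)
            (fun y' _ => abs_nonneg _) (Finset.mem_univ y)
      _ ≤ β ^ n * D0 := hgeo n
      _ = D0 * β ^ n := by ring
  have hlim : ∀ y, ∃ l, Tendsto (fun n => p n y) atTop (nhds l) :=
    fun y => cauchySeq_tendsto_of_complete (hCauchy y)
  choose ν hν using hlim
  have hνnn : ∀ y, 0 ≤ ν y := fun y => ge_of_tendsto' (hν y) (fun n => hpnn n y)
  have hνsum : ∑ x, ν x = 1 := by
    have h1 : Tendsto (fun n => ∑ x, p n x) atTop (nhds (∑ x, ν x)) :=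
      tendsto_finset_sum _ (fun x _ => hν x)
    have h2 : Tendsto (fun n => ∑ x, p n x) atTop (nhds 1) := by
      simp only [hpsum]
      exact tendsto_const_nhds
    exact tendsto_nhds_unique h1 h2
  have hνK : ∀ y, ∑ x, ν x * K x y = ν y := by
    intro y
    have h1 : Tendsto (fun n => ∑ x, p n x * K x y) atTop (nhds (∑ x, ν x * K x y)) :=
      tendsto_finset_sum _ (fun x _ => (hν x).mul_const _)
    have h2 : (fun n => ∑ x, p n x * K x y) = fun n => p (n+1) y := by
      funext n
      rw [hpsucc n]
    have h3 : Tendsto (fun n => p (n+1) y) atTop (nhds (ν y)) :=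
      (hν y).comp (tendsto_add_atTop_nat 1)
    rw [h2] at h1
    exact tendsto_nhds_unique h1 h3
  -- one-step stationarity
  have hνQ : ∀ y, ∑ x, ν x * Q x y = ν y := by
    set ν' : X → ℝ := fun y => ∑ x, ν x * Q x y with hν'def
    have hgoal : ν' = ν := by
      apply hTuniq
      · rw [Finset.sum_comm]
        calc ∑ x, ∑ y, ν x * Q x y = ∑ x, ν x * ∑ y, Q x y := by
              simp [Finset.mul_sum]
          _ = ∑ x, ν x := by simp [hQ1]
      · intro y
        have e2 : ∀ w, ∑ x, Q w x * K x y = ∑ z, K w z * Q z y := by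
          intro w
          have a1 : kerPow Q 3 w y = ∑ x, Q w x * K x y := by
            rw [show (3:ℕ) = 1 + 2 from rfl, kerPow_add]
            simp [kerPow_one, hKdef]
          have a2 : kerPow Q 3 w y = ∑ z, K w z * Q z y := by
            rw [show (3:ℕ) = 2 + 1 from rfl, kerPow_add]
            simp [kerPow_one, hKdef]
          rw [← a1, a2]
        calc ∑ x, ν' x * K x y
            = ∑ w, ν w * ∑ x, Q w x * K x y := by
              simp only [hν'def, Finset.sum_mul]
              rw [Finset.sum_comm]
              simp [Finset.mul_sum, mul_assoc]
          _ = ∑ w, ν w * ∑ z, K w z * Q z y := by simp only [e2]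
          _ = ∑ z, (∑ w, ν w * K w z) * Q z y := by
              simp only [Finset.mul_sum]
              rw [Finset.sum_comm]
              simp [Finset.sum_mul, mul_assoc]
          _ = ∑ z, ν z * Q z y := by simp only [hνK]
          _ = ν' y := rfl
      · exact hνK
    intro y
    exact congrFun hgoal y
  -- uniqueness for Q
  have huniq : ∀ ν'' : X → ℝ, (∑ x, ν'' x = 1) →
      (∀ y, ∑ x, ν'' x * Q x y = ν'' y) → ν'' = ν := by
    intro ν'' hsum hfix
    apply hTuniq _ _ (by rw [hsum, hνsum])
    · intro y
      calc ∑ x, ν'' x * K x y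
          = ∑ z, (∑ x, ν'' x * Q x z) * Q z y := by
            simp only [hKQ, Finset.mul_sum]
            rw [Finset.sum_comm]
            simp [Finset.sum_mul, mul_assoc]
        _ = ∑ z, ν'' z * Q z y := by simp only [hfix]
        _ = ν'' y := hfix y
    · exact hνK
  -- t-step stationarity
  have hstat : ∀ t y, ∑ x, ν x * kerPow Q t x y = ν y := by
    intro t
    induction t with
    | zero =>
      intro y
      simp only [kerPow_zero, mul_ite, mul_one, mul_zero]
      simp [Finset.sum_ite_eq, Finset.sum_ite_eq']
    | succ t ih =>
      intro y
      simp only [kerPow_succ]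
      calc ∑ x, ν x * ∑ z, kerPow Q t x z * Q z y
          = ∑ z, (∑ x, ν x * kerPow Q t x z) * Q z y := by
            simp only [Finset.mul_sum]
            rw [Finset.sum_comm]
            simp [Finset.sum_mul, mul_assoc]
        _ = ∑ z, ν z * Q z y := by simp only [ih]
        _ = ν y := hνQ y
  -- powers contraction
  have hpow : ∀ m (δ : X → ℝ), ∑ x, δ x = 0 →
      ∑ y, |∑ x, δ x * kerPow Q (2*m) x y| ≤ β ^ m * ∑ x, |δ x| := by
    intro m
    induction m with
    | zero =>
      intro δ hδ
      simp only [Nat.mul_zero, kerPow_zero, mul_ite, mul_one, mul_zero, pow_zero, one_mul]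
      apply le_of_eq
      congr 1
      ext y
      congr 1
      simp [Finset.sum_ite_eq, Finset.sum_ite_eq']
    | succ m ih =>
      intro δ hδ
      set δ' : X → ℝ := fun z => ∑ x, δ x * kerPow Q (2*m) x z with hδ'def
      have hδ'0 : ∑ z, δ' z = 0 := by
        rw [hδ'def]
        simp only
        rw [Finset.sum_comm]
        calc ∑ x, ∑ z, δ x * kerPow Q (2*m) x z
            = ∑ x, δ x * ∑ z, kerPow Q (2*m) x z := by simp [Finset.mul_sum]
          _ = ∑ x, δ x := by simp [kerPow_row_sum Q hQ1]
          _ = 0 := hδ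
      have hrw : ∀ y, ∑ x, δ x * kerPow Q (2*(m+1)) x y = ∑ z, δ' z * K z y := by
        intro y
        have h2 : (2*(m+1) : ℕ) = 2*m + 2 := by ring
        simp only [h2, kerPow_add, ← hKdef]
        simp only [Finset.mul_sum]
        rw [Finset.sum_comm]
        simp [hδ'def, Finset.sum_mul, mul_assoc]
      calc ∑ y, |∑ x, δ x * kerPow Q (2*(m+1)) x y|
          = ∑ y, |∑ z, δ' z * K z y| := by simp only [hrw]
        _ ≤ β * ∑ z, |δ' z| := hcontr δ' hδ'0
        _ ≤ β * (β ^ m * ∑ x, |δ x|) := mul_le_mul_of_nonneg_left (ih δ hδ) hβ0.le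
        _ = β ^ (m+1) * ∑ x, |δ x| := by ring
  refine ⟨ν, hνnn, hνsum, hνQ, huniq, ?_⟩
  intro x t ht
  set α : ℝ := Real.sqrt β with hαdef
  have hα0 : 0 < α := Real.sqrt_pos.2 hβ0
  have hα1 : α < 1 := by
    rw [hαdef, show (1:ℝ) = Real.sqrt 1 by simp]
    exact Real.sqrt_lt_sqrt hβ0.le hβ1
  have hα2 : α ^ 2 = β := Real.sq_sqrt hβ0.le
  set δ : X → ℝ := fun z => (if x = z then (1:ℝ) else 0) - ν z with hδdef
  have hδsum : ∑ z, δ z = 0 := by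
    simp only [hδdef, Finset.sum_sub_distrib, hνsum]
    simp [Finset.sum_ite_eq, Finset.sum_ite_eq']
  have hδabs : ∑ z, |δ z| ≤ 2 := by
    have habs : ∀ a b : ℝ, 0 ≤ a → 0 ≤ b → |a - b| ≤ a + b := by
      intro a b ha hb
      rw [abs_sub_le_iff]
      constructor <;> linarith
    calc ∑ z, |δ z| ≤ ∑ z, ((if x = z then (1:ℝ) else 0) + ν z) := by
          refine Finset.sum_le_sum fun z _ => ?_
          exact habs _ _ (by split <;> norm_num) (hνnn z)
      _ = 2 := by
          rw [Finset.sum_add_distrib, hνsum]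
          simp [Finset.sum_ite_eq, Finset.sum_ite_eq']
          norm_num
  have hrepr : ∀ y, kerPow Q t x y - ν y = ∑ z, δ z * kerPow Q t z y := by
    intro y
    simp only [hδdef, sub_mul, Finset.sum_sub_distrib, hstat t y, ite_mul, one_mul, zero_mul]
    simp [Finset.sum_ite_eq, Finset.sum_ite_eq']
  set m : ℕ := t / 2 with hmdef
  set r : ℕ := t % 2 with hrdef
  have htmr : 2 * m + r = t := Nat.div_add_mod t 2
  set δ' : X → ℝ := fun w => ∑ z, δ z * kerPow Q (2*m) z w with hδ'def
  have hδ'bound : ∑ w, |δ' w| ≤ β ^ m * 2 := by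
    refine (hpow m δ hδsum).trans ?_
    exact mul_le_mul_of_nonneg_left hδabs (by positivity)
  have hsplitsum : ∀ y, ∑ z, δ z * kerPow Q t z y = ∑ w, δ' w * kerPow Q r w y := by
    intro y
    conv_lhs => rw [← htmr]
    simp only [kerPow_add, Finset.mul_sum]
    rw [Finset.sum_comm]
    simp [hδ'def, Finset.sum_mul, mul_assoc]
  have hbound : ∑ y, |kerPow Q t x y - ν y| ≤ β ^ m * 2 := by
    simp only [hrepr, hsplitsum]
    rcases Nat.mod_two_eq_zero_or_one t with h | h
    · rw [hrdef, h]
      simp only [kerPow_zero, mul_ite, mul_one, mul_zero]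
      calc ∑ y, |∑ w, if w = y then δ' w else 0|
          = ∑ y, |δ' y| := by
            congr 1; ext y; congr 1
            simp [Finset.sum_ite_eq, Finset.sum_ite_eq']
        _ ≤ β ^ m * 2 := hδ'bound
    · rw [hrdef, h]
      simp only [kerPow_one]
      exact (l1_nonexpansive Q hQ0 hQ1 δ').trans hδ'bound
  have hm : t - 1 ≤ 2 * m := by omega
  have hfin : β ^ m ≤ α⁻¹ * α ^ t := by
    have e1 : β ^ m = α ^ (2 * m) := by rw [pow_mul, hα2]
    have e2 : α ^ (2*m) ≤ α ^ (t - 1) := pow_le_pow_of_le_one hα0.le hα1.le hm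
    have e3 : α ^ (t - 1) = α⁻¹ * α ^ t := by
      have : t = (t - 1) + 1 := by omega
      rw [this, pow_succ]
      field_simp
      simp
    rw [e1, ← e3]
    exact e2
  calc (1/2 : ℝ) * ∑ y, |kerPow Q t x y - ν y|
      ≤ (1/2 : ℝ) * (β ^ m * 2) := by linarith [hbound]
    _ = β ^ m := by ring
    _ ≤ α⁻¹ * α ^ t := hfin

end Generic

/-- **Proposition 1: uniform geometric ergodicity** of the chain induced by a
parameterized options-with-failure policy over a compact parameter set. -/
theorem uniform_geometric_ergodicity {d : ℕ} {S A O : Type*}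
    [Fintype S] [Fintype A] [Fintype O]
    [Nonempty S] [Nonempty A] [Nonempty O]
    [DecidableEq S] [DecidableEq A] [DecidableEq O]
    (Θ : Set (EuclideanSpace ℝ (Fin d))) (hΘne : Θ.Nonempty) (hΘcomp : IsCompact Θ)
    (pib : Bool → S → O → EuclideanSpace ℝ (Fin d) → ℝ)
    (pihi : O → S → EuclideanSpace ℝ (Fin d) → ℝ)
    (pilo : A → S → O → EuclideanSpace ℝ (Fin d) → ℝ)
    (hpib_pos : ∀ θ ∈ Θ, ∀ b s o, 0 < pib b s o θ)
    (hpib_sum : ∀ θ ∈ Θ, ∀ s o, ∑ b, pib b s o θ = 1)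
    (hpib_cont : ∀ b s o, ContinuousOn (fun θ => pib b s o θ) Θ)
    (hpihi_pos : ∀ θ ∈ Θ, ∀ o s, 0 < pihi o s θ)
    (hpihi_sum : ∀ θ ∈ Θ, ∀ s, ∑ o, pihi o s θ = 1)
    (hpihi_cont : ∀ o s, ContinuousOn (fun θ => pihi o s θ) Θ)
    (hpilo_pos : ∀ θ ∈ Θ, ∀ a s o, 0 < pilo a s o θ)
    (hpilo_sum : ∀ θ ∈ Θ, ∀ s o, ∑ a, pilo a s o θ = 1)
    (hpilo_cont : ∀ a s o, ContinuousOn (fun θ => pilo a s o θ) Θ)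
    (ζ : ℝ) (hζ : ζ ∈ Set.Ioo (0 : ℝ) 1)
    (P : S → S → A → ℝ)
    (hPnonneg : ∀ s' s a, 0 ≤ P s' s a) (hPsum : ∀ s a, ∑ s', P s' s a = 1)
    (hreach : ∀ s s' : S, ∃ a : A, 0 < P s' s a) :
    ∃ ν : EuclideanSpace ℝ (Fin d) → (S × A × O × Bool) → ℝ,
      (∀ θ ∈ Θ,
        (∀ x, 0 ≤ ν θ x) ∧ (∑ x, ν θ x = 1) ∧
        (∀ x', ∑ x, ν θ x * optionsKernelP P pib pihi pilo ζ θ x x' = ν θ x') ∧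
        (∀ ν' : (S × A × O × Bool) → ℝ,
          (∀ x, 0 ≤ ν' x) → (∑ x, ν' x = 1) →
          (∀ x', ∑ x, ν' x * optionsKernelP P pib pihi pilo ζ θ x x' = ν' x') →
          ν' = ν θ)) ∧
      ∃ C > (0 : ℝ), ∃ α ∈ Set.Ioo (0 : ℝ) 1,
        ∀ θ ∈ Θ, ∀ x : S × A × O × Bool, ∀ t : ℕ, 1 ≤ t →
          tvDist (kerPow (optionsKernelP P pib pihi pilo ζ θ) t x) (ν θ) ≤ C * α ^ t := by
  classical
  set Qf : (EuclideanSpace ℝ (Fin d)) → (S × A × O × Bool) → (S × A × O × Bool) → ℝ := fun θ => optionsKernelP P pib pihi pilo ζ θ with hQfdef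
  have hO1 : (1:ℝ) ≤ (Fintype.card O : ℝ) := by exact_mod_cast Fintype.card_pos
  obtain ⟨hζ0, hζ1⟩ := hζ
  -- positivity of pibar
  have hpibar_pos : ∀ θ ∈ Θ, ∀ o' s o b, 0 < pibarHiP pihi ζ o' s o b θ := by
    intro θ hθ o' s o b
    unfold pibarHiP
    cases b with
    | false =>
      simp only [Bool.false_eq_true, if_false]
      split
      · have : 0 < ζ / (Fintype.card O : ℝ) := by positivity
        nlinarith
      · positivity
    | true => simpa using hpihi_pos θ hθ o' s
  -- pibar sums to 1
  have hpibar_sum : ∀ θ ∈ Θ, ∀ s o b, ∑ o', pibarHiP pihi ζ o' s o b θ = 1 := by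
    intro θ hθ s o b
    unfold pibarHiP
    cases b with
    | true => simpa using hpihi_sum θ hθ s
    | false =>
      simp only [Bool.false_eq_true, if_false]
      have hrw : ∀ o' : O, (if o' = o then 1 - ζ + ζ / (Fintype.card O : ℝ)
          else ζ / (Fintype.card O : ℝ)) =
          ζ / (Fintype.card O : ℝ) + (if o' = o then 1 - ζ else 0) := by
        intro o'; split <;> ring
      rw [Finset.sum_congr rfl (fun o' _ => hrw o')]
      rw [Finset.sum_add_distrib, Finset.sum_const, Finset.sum_ite_eq' Finset.univ o,
        if_pos (Finset.mem_univ o), nsmul_eq_mul]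
      have hOne : (Fintype.card O : ℝ) ≠ 0 := by linarith
      field_simp
      rw [Finset.card_univ]; ring
  -- Q nonneg
  have hQ0 : ∀ θ ∈ Θ, ∀ x y : (S × A × O × Bool), 0 ≤ Qf θ x y := by
    intro θ hθ x y
    exact mul_nonneg (mul_nonneg (mul_nonneg (hPnonneg _ _ _)
      (hpib_pos θ hθ _ _ _).le) (hpibar_pos θ hθ _ _ _ _).le) (hpilo_pos θ hθ _ _ _).le
  -- Q rows sum to 1
  have hQ1 : ∀ θ ∈ Θ, ∀ x : (S × A × O × Bool), ∑ y, Qf θ x y = 1 := by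
    intro θ hθ x
    obtain ⟨s, a, o, b⟩ := x
    rw [Fintype.sum_prod_type]
    have inner : ∀ s' : S,
        ∑ y : A × O × Bool, Qf θ (s, a, o, b) (s', y.1, y.2.1, y.2.2) = P s' s a := by
      intro s'
      rw [Fintype.sum_prod_type]
      have hb : ∀ o' : O,
          ∑ b' : Bool, pib b' s' o θ * pibarHiP pihi ζ o' s' o b' θ
            = ∑ b' : Bool, pib b' s' o θ * pibarHiP pihi ζ o' s' o b' θ := fun _ => rfl
      have step1 : ∀ a' : A,
          ∑ y : O × Bool, Qf θ (s, a, o, b) (s', a', y.1, y.2)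
            = P s' s a * ∑ o' : O, (∑ b' : Bool, pib b' s' o θ *
                pibarHiP pihi ζ o' s' o b' θ) * pilo a' s' o' θ := by
        intro a'
        rw [Fintype.sum_prod_type, Finset.mul_sum]
        refine Finset.sum_congr rfl fun o' _ => ?_
        rw [Finset.sum_mul, Finset.mul_sum]
        refine Finset.sum_congr rfl fun b' _ => ?_
        simp only [hQfdef, optionsKernelP]
        ring
      rw [Finset.sum_congr rfl fun a' _ => step1 a', ← Finset.mul_sum]
      have step2 : ∑ a' : A, ∑ o' : O,
          (∑ b' : Bool, pib b' s' o θ * pibarHiP pihi ζ o' s' o b' θ) * pilo a' s' o' θ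
            = 1 := by
        rw [Finset.sum_comm]
        have : ∀ o' : O,
            ∑ a' : A, (∑ b' : Bool, pib b' s' o θ * pibarHiP pihi ζ o' s' o b' θ)
              * pilo a' s' o' θ
            = ∑ b' : Bool, pib b' s' o θ * pibarHiP pihi ζ o' s' o b' θ := by
          intro o'
          rw [← Finset.mul_sum, hpilo_sum θ hθ s' o', mul_one]
        rw [Finset.sum_congr rfl fun o' _ => this o', Finset.sum_comm]
        have : ∀ b' : Bool, ∑ o' : O, pib b' s' o θ * pibarHiP pihi ζ o' s' o b' θ
            = pib b' s' o θ := by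
          intro b'
          rw [← Finset.mul_sum, hpibar_sum θ hθ s' o b', mul_one]
        rw [Finset.sum_congr rfl fun b' _ => this b', hpib_sum θ hθ s' o]
      rw [step2, mul_one]
    calc ∑ s' : S, ∑ y : A × O × Bool, Qf θ (s, a, o, b) (s', y.1, y.2.1, y.2.2)
        = ∑ s' : S, P s' s a := Finset.sum_congr rfl fun s' _ => inner s'
      _ = 1 := hPsum s a
  -- positivity of two-step kernel
  have hexP : ∀ s a, ∃ s', 0 < P s' s a := by
    intro s a
    by_contra h
    push_neg at h
    have : ∑ s', P s' s a ≤ 0 := Finset.sum_nonpos fun s' _ => h s'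
    rw [hPsum s a] at this
    linarith
  have hK2rw : ∀ θ (x y : (S × A × O × Bool)), kerPow (Qf θ) 2 x y = ∑ z, Qf θ x z * Qf θ z y := by
    intro θ x y
    rw [show (2:ℕ) = 1+1 from rfl, kerPow_add]
    simp [kerPow_one]
  have hKpos : ∀ θ ∈ Θ, ∀ x y : (S × A × O × Bool), 0 < kerPow (Qf θ) 2 x y := by
    intro θ hθ x y
    obtain ⟨s, a, o, b⟩ := x
    obtain ⟨s2, a2, o2, b2⟩ := y
    obtain ⟨s1, hs1⟩ := hexP s a
    obtain ⟨a1, ha1⟩ := hreach s1 s2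
    rw [hK2rw]
    have hz : 0 < Qf θ (s, a, o, b) (s1, a1, o2, true) *
        Qf θ (s1, a1, o2, true) (s2, a2, o2, b2) := by
      apply mul_pos
      · simp only [hQfdef, optionsKernelP]
        exact mul_pos (mul_pos (mul_pos hs1 (hpib_pos θ hθ _ _ _))
          (hpibar_pos θ hθ _ _ _ _)) (hpilo_pos θ hθ _ _ _)
      · simp only [hQfdef, optionsKernelP]
        exact mul_pos (mul_pos (mul_pos ha1 (hpib_pos θ hθ _ _ _))
          (hpibar_pos θ hθ _ _ _ _)) (hpilo_pos θ hθ _ _ _)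
    refine Finset.sum_pos' (fun z _ => mul_nonneg (hQ0 θ hθ _ _) (hQ0 θ hθ _ _)) ?_
    exact ⟨(s1, a1, o2, true), Finset.mem_univ _, hz⟩
  -- continuity of the two-step kernel in θ
  have hQcont : ∀ x y : (S × A × O × Bool), ContinuousOn (fun θ => Qf θ x y) Θ := by
    intro x y
    simp only [hQfdef, optionsKernelP]
    have hpibarc : ContinuousOn
        (fun θ => pibarHiP pihi ζ y.2.2.1 y.1 x.2.2.1 y.2.2.2 θ) Θ := by
      unfold pibarHiP
      rcases y.2.2.2 with _ | _
      · simp only [Bool.false_eq_true, if_false]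
        split <;> exact continuousOn_const
      · simpa using hpihi_cont y.2.2.1 y.1
    exact ((continuousOn_const.mul (hpib_cont _ _ _)).mul hpibarc).mul (hpilo_cont _ _ _)
  have hKcont : ∀ x y : (S × A × O × Bool), ContinuousOn (fun θ => kerPow (Qf θ) 2 x y) Θ := by
    intro x y
    have : (fun θ => kerPow (Qf θ) 2 x y) = fun θ => ∑ z, Qf θ x z * Qf θ z y :=
      funext fun θ => hK2rw θ x y
    rw [this]
    exact continuousOn_finset_sum _ fun z _ => (hQcont x z).mul (hQcont z y)
  -- uniform lower bound
  have hminpair : ∀ p : (S × A × O × Bool) × (S × A × O × Bool), ∃ c : ℝ, 0 < c ∧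
      ∀ θ ∈ Θ, c ≤ kerPow (Qf θ) 2 p.1 p.2 := by
    intro p
    obtain ⟨θm, hθm, hmin⟩ := hΘcomp.exists_isMinOn hΘne (hKcont p.1 p.2)
    exact ⟨kerPow (Qf θm) 2 p.1 p.2, hKpos θm hθm p.1 p.2, fun θ hθ => hmin hθ⟩
  choose cfun hcpos hclb using hminpair
  have hXne : (Finset.univ : Finset ((S × A × O × Bool) × (S × A × O × Bool))).Nonempty := Finset.univ_nonempty
  set ε0 : ℝ := Finset.univ.inf' hXne cfun with hε0def
  have hε0pos : 0 < ε0 := by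
    rw [hε0def, Finset.lt_inf'_iff]
    exact fun p _ => hcpos p
  have hε0lb : ∀ θ ∈ Θ, ∀ x y : (S × A × O × Bool), ε0 ≤ kerPow (Qf θ) 2 x y := by
    intro θ hθ x y
    exact (Finset.inf'_le cfun (Finset.mem_univ (x, y))).trans (hclb (x, y) θ hθ)
  -- ε0 * card (S × A × O × Bool) ≤ 1
  set NX : ℝ := (Fintype.card (S × A × O × Bool) : ℝ) with hNXdef
  have hε0N : ε0 * NX ≤ 1 := by
    obtain ⟨θ0, hθ0⟩ := hΘne
    have h1 : ∀ y : (S × A × O × Bool), ε0 ≤ kerPow (Qf θ0) 2 (Classical.arbitrary (S × A × O × Bool)) y :=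
      hε0lb θ0 hθ0 _
    have h2 : ∑ y : (S × A × O × Bool), ε0 ≤ ∑ y : (S × A × O × Bool), kerPow (Qf θ0) 2 (Classical.arbitrary (S × A × O × Bool)) y :=
      Finset.sum_le_sum fun y _ => h1 y
    rw [kerPow_row_sum _ (hQ1 θ0 hθ0), Finset.sum_const, nsmul_eq_mul] at h2
    simp only [Finset.card_univ] at h2
    rw [hNXdef]
    linarith [h2]
  set ε : ℝ := ε0 / 2 with hεdef
  have hε : 0 < ε := by rw [hεdef]; positivity
  have hNX1 : (1:ℝ) ≤ NX := by rw [hNXdef]; exact_mod_cast Fintype.card_pos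
  have hεN : ε * NX < 1 := by
    rw [hεdef]
    nlinarith
  have hεlb : ∀ θ ∈ Θ, ∀ x y : (S × A × O × Bool), ε ≤ kerPow (Qf θ) 2 x y := by
    intro θ hθ x y
    refine le_trans ?_ (hε0lb θ hθ x y)
    rw [hεdef]; linarith
  -- apply the generic theorem
  have H : ∀ θ, θ ∈ Θ → ∃ ν : (S × A × O × Bool) → ℝ, (∀ x, 0 ≤ ν x) ∧ (∑ x, ν x = 1) ∧
      (∀ y, ∑ x, ν x * Qf θ x y = ν y) ∧
      (∀ ν' : (S × A × O × Bool) → ℝ, (∑ x, ν' x = 1) → (∀ y, ∑ x, ν' x * Qf θ x y = ν' y) → ν' = ν) ∧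
      (∀ x (t : ℕ), 1 ≤ t →
        (1/2 : ℝ) * ∑ y, |kerPow (Qf θ) t x y - ν y| ≤
          (Real.sqrt (1 - ε * NX))⁻¹ * (Real.sqrt (1 - ε * NX)) ^ t) := by
    intro θ hθ
    exact doeblin_main (Qf θ) (hQ0 θ hθ) (hQ1 θ hθ) ε hε hεN (hεlb θ hθ)
  set ν : (EuclideanSpace ℝ (Fin d)) → (S × A × O × Bool) → ℝ :=
    fun θ => if h : θ ∈ Θ then (H θ h).choose else fun _ => 0 with hνdef
  have hνspec : ∀ θ (h : θ ∈ Θ), (∀ x, 0 ≤ ν θ x) ∧ (∑ x, ν θ x = 1) ∧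
      (∀ y, ∑ x, ν θ x * Qf θ x y = ν θ y) ∧
      (∀ ν' : (S × A × O × Bool) → ℝ, (∑ x, ν' x = 1) → (∀ y, ∑ x, ν' x * Qf θ x y = ν' y) → ν' = ν θ) ∧
      (∀ x (t : ℕ), 1 ≤ t →
        (1/2 : ℝ) * ∑ y, |kerPow (Qf θ) t x y - ν θ y| ≤
          (Real.sqrt (1 - ε * NX))⁻¹ * (Real.sqrt (1 - ε * NX)) ^ t) := by
    intro θ h
    have := (H θ h).choose_spec
    rw [hνdef]
    simp only [dif_pos h]
    exact this
  set β : ℝ := 1 - ε * NX with hβdef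
  have hβ0 : 0 < β := by rw [hβdef]; linarith
  have hβ1 : β < 1 := by rw [hβdef]; nlinarith
  set α : ℝ := Real.sqrt β with hαdef
  have hα0 : 0 < α := Real.sqrt_pos.2 hβ0
  have hα1 : α < 1 := by
    rw [hαdef, show (1:ℝ) = Real.sqrt 1 by simp]
    exact Real.sqrt_lt_sqrt hβ0.le hβ1
  refine ⟨ν, ?_, α⁻¹, by positivity, α, ⟨hα0, hα1⟩, ?_⟩
  · intro θ hθ
    obtain ⟨h1, h2, h3, h4, _⟩ := hνspec θ hθ
    exact ⟨h1, h2, h3, fun ν' _ hs hst => h4 ν' hs hst⟩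
  · intro θ hθ x t ht
    obtain ⟨_, _, _, _, h5⟩ := hνspec θ hθ
    exact h5 x t ht
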